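/- arXiv:solv-int/9508002 — 2 statements merged into one kernel-verified Lean document; each statement's English description precedes it below -/
import Mathlib

section
/- If P is a polynomial of degree d, then Σ_{k=0}^∞ ((a)_k / k!) P(k) t^k = Q(t) (1−t)^{−a−d} for |t| < 1, where Q is a polynomial of degree at most d. -/
open Polynomial Complex Filter Finset

noncomputable def bc (b : ℂ) (k : ℕ) : ℂ := (ascPochhammer ℂ k).eval b / (Nat.factorial k : ℂ)

lemma bc_zero (b : ℂ) : bc b 0 = 1 := by simp [bc]

lemma bc_succ (b : ℂ) (k : ℕ) : bc b (k+1) = bc b k * (b + k) / ((k:ℂ)+1) := by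
  rw [bc, bc, ascPochhammer_succ_right, eval_mul, Nat.factorial_succ, eval_add, eval_X,
    eval_natCast]
  push_cast
  rw [div_mul_eq_mul_div, div_div]
  ring_nf

lemma norm_bc_le (b : ℂ) (k : ℕ) : ‖bc b k‖ ≤ ((k:ℝ)+1)^(⌈‖b‖⌉₊) := by
  induction k with
  | zero => simp [bc_zero]
  | succ k ih =>
    set m := ⌈‖b‖⌉₊ with hm
    have hk1 : (0:ℝ) < (k:ℝ)+1 := by positivity
    have hnorm : ‖bc b (k+1)‖ = ‖bc b k‖ * ‖b + k‖ / ((k:ℝ)+1) := by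
      rw [bc_succ, norm_div, norm_mul,
        show ((k:ℂ)+1) = ((k+1:ℕ):ℂ) by push_cast; ring, Complex.norm_natCast]
      push_cast; ring
    have hb : ‖b + (k:ℂ)‖ ≤ (m:ℝ) + k := by
      refine (norm_add_le _ _).trans ?_
      have : ‖b‖ ≤ (m:ℝ) := Nat.le_ceil _
      simp only [Complex.norm_natCast]
      linarith
    have hx : ((k:ℝ)+1) * (1 + ((k:ℝ)+1)⁻¹) = (k:ℝ)+2 := by
      rw [mul_add, mul_one, mul_inv_cancel₀ hk1.ne']; ring
    have key : ((k:ℝ)+1)^m * ((m:ℝ)+(k:ℝ)) ≤ ((k:ℝ)+2)^m * ((k:ℝ)+1) := by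
      have h := one_add_mul_le_pow (a := ((k:ℝ)+1)⁻¹)
        (by have := inv_nonneg.mpr hk1.le; linarith) m
      calc ((k:ℝ)+1)^m * ((m:ℝ)+(k:ℝ))
          ≤ ((k:ℝ)+1)^m * ((1 + m*((k:ℝ)+1)⁻¹) * ((k:ℝ)+1)) := by
            gcongr
            rw [add_mul, one_mul, mul_assoc, inv_mul_cancel₀ hk1.ne']
            linarith
        _ ≤ ((k:ℝ)+1)^m * ((1+((k:ℝ)+1)⁻¹)^m * ((k:ℝ)+1)) := by
            gcongr
        _ = (((k:ℝ)+1) * (1+((k:ℝ)+1)⁻¹))^m * ((k:ℝ)+1) := by rw [mul_pow]; ring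
        _ = ((k:ℝ)+2)^m * ((k:ℝ)+1) := by rw [hx]
    rw [hnorm, div_le_iff₀ hk1]
    push_cast
    calc ‖bc b k‖ * ‖b + (k:ℂ)‖ ≤ ((k:ℝ)+1)^m * ((m:ℝ)+k) := by
          gcongr
      _ ≤ ((k:ℝ)+2)^m * ((k:ℝ)+1) := key
      _ = ((k:ℝ)+1+1)^m * ((k:ℝ)+1) := by ring_nf


set_option maxHeartbeats 1000000 in
lemma summable_aux (b : ℂ) (M : ℕ) {r : ℝ} (h0 : 0 ≤ r) (h1 : r < 1) :
    Summable (fun k : ℕ => ((k:ℝ)+1)^M * ‖bc b k‖ * r^k) := by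
  set m := ⌈‖b‖⌉₊ with hm
  have hg : Summable (fun k : ℕ => ((k:ℝ)+1)^(M+m) * r^k) := by
    rcases eq_or_lt_of_le h0 with h|h
    · apply summable_of_ne_finset_zero (s := {0})
      intro k hk
      have hk0 : k ≠ 0 := by simpa using hk
      rw [← h, zero_pow hk0, mul_zero]
    · have hr : ‖r‖ < 1 := by rwa [Real.norm_of_nonneg h0]
      have h2 := summable_pow_mul_geometric_of_norm_lt_one (R := ℝ) (M+m) hr
      have h3 : Summable (fun n : ℕ => ((n+1:ℕ):ℝ)^(M+m) * r^(n+1)) :=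
        (summable_nat_add_iff 1).mpr h2
      have h4 := h3.mul_left r⁻¹
      refine h4.congr fun n => ?_
      push_cast
      rw [pow_succ]
      field_simp
  refine Summable.of_nonneg_of_le (fun k => by positivity) (fun k => ?_) hg
  have hb := norm_bc_le b k
  have h2 : (0:ℝ) ≤ r^k := pow_nonneg h0 k
  have h3 : (0:ℝ) ≤ ((k:ℝ)+1)^M := by positivity
  calc ((k:ℝ)+1)^M * ‖bc b k‖ * r^k ≤ ((k:ℝ)+1)^M * ((k:ℝ)+1)^m * r^k :=
        mul_le_mul_of_nonneg_right (mul_le_mul_of_nonneg_left hb h3) h2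
    _ = ((k:ℝ)+1)^(M+m) * r^k := by rw [pow_add]

lemma poly_bound (P : Polynomial ℂ) : ∃ C : ℝ, 0 ≤ C ∧
    ∀ k : ℕ, ‖P.eval (k:ℂ)‖ ≤ C * ((k:ℝ)+1)^P.natDegree := by
  refine ⟨∑ i ∈ range (P.natDegree+1), ‖P.coeff i‖, by positivity, fun k => ?_⟩
  rw [Polynomial.eval_eq_sum_range]
  calc ‖∑ i ∈ range (P.natDegree+1), P.coeff i * (k:ℂ)^i‖
      ≤ ∑ i ∈ range (P.natDegree+1), ‖P.coeff i * (k:ℂ)^i‖ := norm_sum_le _ _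
    _ ≤ ∑ i ∈ range (P.natDegree+1), ‖P.coeff i‖ * ((k:ℝ)+1)^P.natDegree := by
        refine Finset.sum_le_sum fun i hi => ?_
        rw [norm_mul, norm_pow, Complex.norm_natCast]
        have h1 : (k:ℝ)^i ≤ ((k:ℝ)+1)^i := by gcongr <;> linarith [Nat.cast_nonneg (α := ℝ) k]
        have h2 : ((k:ℝ)+1)^i ≤ ((k:ℝ)+1)^P.natDegree := by
          apply pow_le_pow_right₀ (by linarith [Nat.cast_nonneg (α := ℝ) k])
          exact Nat.lt_succ_iff.mp (Finset.mem_range.mp hi)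
        exact mul_le_mul_of_nonneg_left (h1.trans h2) (norm_nonneg _)
    _ = (∑ i ∈ range (P.natDegree+1), ‖P.coeff i‖) * ((k:ℝ)+1)^P.natDegree := by
        rw [Finset.sum_mul]

lemma summable_poly (b : ℂ) (P : Polynomial ℂ) {t : ℂ} (ht : ‖t‖ < 1) :
    Summable (fun k : ℕ => bc b k * P.eval (k:ℂ) * t ^ k) := by
  obtain ⟨C, hC0, hC⟩ := poly_bound P
  have hs := (summable_aux b P.natDegree (norm_nonneg t) ht).mul_left C
  refine Summable.of_norm_bounded hs fun k => ?_
  rw [norm_mul, norm_mul, norm_pow]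
  calc ‖bc b k‖ * ‖P.eval (k:ℂ)‖ * ‖t‖^k
      ≤ ‖bc b k‖ * (C * ((k:ℝ)+1)^P.natDegree) * ‖t‖^k := by
        gcongr
        exact hC k
    _ = C * (((k:ℝ)+1)^P.natDegree * ‖bc b k‖ * ‖t‖^k) := by ring

lemma summable_bc (b : ℂ) {t : ℂ} (ht : ‖t‖ < 1) : Summable fun k : ℕ => bc b k * t ^ k :=
  (summable_poly b 1 ht).congr fun k => by simp


lemma one_sub_ne_zero' {t : ℂ} (ht : ‖t‖ < 1) : 1 - t ≠ 0 := by
  intro h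
  have : t = 1 := by linear_combination -h
  rw [this] at ht
  simp at ht

lemma one_sub_mem' {t : ℂ} (ht : ‖t‖ < 1) : 1 - t ∈ Complex.slitPlane := by
  have h := Complex.mem_slitPlane_of_norm_lt_one (z := -t) (by simpa)
  simpa [sub_eq_add_neg] using h

lemma bc_mul_succ (b : ℂ) (k : ℕ) : bc b (k+1) * ((k:ℂ)+1) = bc b k * (b + k) := by
  rw [bc_succ]
  field_simp [Nat.cast_add_one_ne_zero k]

lemma hasDerivAt_F (b : ℂ) {t : ℂ} (ht : ‖t‖ < 1) :
    HasDerivAt (fun z : ℂ => ∑' k : ℕ, bc b k * z ^ k)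
      (∑' k : ℕ, bc b k * ((k:ℂ) * t ^ (k-1))) t := by
  set r : ℝ := (‖t‖ + 1)/2 with hr
  have h0 : 0 < r := by positivity
  have h1 : r < 1 := by rw [hr]; linarith
  have htr : ‖t‖ < r := by rw [hr]; linarith
  have hu : Summable (fun k : ℕ => r⁻¹ * (((k:ℝ)+1)^1 * ‖bc b k‖ * r^k)) :=
    (summable_aux b 1 h0.le h1).mul_left _
  refine hasDerivAt_tsum_of_isPreconnected hu (Metric.isOpen_ball (x := (0:ℂ)) (ε := r))
    ((convex_ball (0:ℂ) r).isPreconnected)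
    (fun k y _ => (hasDerivAt_pow k y).const_mul (bc b k))
    (fun k y hy => ?_) (Metric.mem_ball_self h0)
    (summable_bc b (t := 0) (by simp)) (by simpa [Metric.mem_ball, dist_zero_right] using htr)
  -- bound
  have hyr : ‖y‖ ≤ r := by
    have := Metric.mem_ball.mp hy
    rw [dist_zero_right] at this
    exact this.le
  rw [norm_mul, norm_mul, norm_pow, Complex.norm_natCast]
  match k with
  | 0 => simp; positivity
  | (j+1) =>
    have hyj : ‖y‖^j ≤ r^j := pow_le_pow_left₀ (norm_nonneg _) hyr j
    have : ((j+1:ℕ):ℝ) * ‖y‖^(j+1-1) ≤ r⁻¹ * (((j:ℝ)+1+1)^1 * r^(j+1)) := by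
      simp only [Nat.add_sub_cancel, pow_one]
      have hrw : r⁻¹ * (((j:ℝ)+1+1) * (r^j*r)) = ((j:ℝ)+1+1) * r^j := by
        field_simp
      rw [pow_succ, hrw]
      push_cast
      nlinarith [hyj, pow_nonneg (norm_nonneg y) j, pow_nonneg h0.le j]
    calc ‖bc b (j+1)‖ * (((j+1:ℕ):ℝ) * ‖y‖^(j+1-1))
        ≤ ‖bc b (j+1)‖ * (r⁻¹ * (((j:ℝ)+1+1)^1 * r^(j+1))) := by
          exact mul_le_mul_of_nonneg_left (by exact_mod_cast this) (norm_nonneg _)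
      _ = r⁻¹ * ((((j+1:ℕ):ℝ)+1)^1 * ‖bc b (j+1)‖ * r^(j+1)) := by push_cast; ring

lemma deriv_rel (b : ℂ) {t : ℂ} (ht : ‖t‖ < 1) :
    (1 - t) * (∑' k : ℕ, bc b k * ((k:ℂ) * t ^ (k-1)))
      = b * ∑' k : ℕ, bc b k * t ^ k := by
  have hshift : ∀ k : ℕ, bc b (k+1) * (((k:ℕ)+1:ℂ) * t^k) = bc b k * ((b+k) * t^k) := by
    intro k
    rw [← mul_assoc, bc_mul_succ, mul_assoc]
  have hS1 : Summable (fun k : ℕ => bc b k * ((b+k) * t^k)) := by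
    refine (summable_poly b (Polynomial.C b + Polynomial.X) ht).congr fun k => ?_
    simp only [eval_add, eval_C, eval_X]
    ring
  have hS1' : Summable (fun k : ℕ => bc b (k+1) * (((k:ℕ)+1:ℂ) * t^k)) :=
    hS1.congr fun k => (hshift k).symm
  have hSd : Summable (fun k : ℕ => bc b k * ((k:ℂ) * t ^ (k-1))) := by
    refine (summable_nat_add_iff 1).mp (hS1'.congr fun k => ?_)
    simp only [Nat.add_sub_cancel]
    push_cast
    ring
  have hS2 : Summable (fun k : ℕ => bc b k * ((k:ℂ) * t^k)) := by
    refine (summable_poly b Polynomial.X ht).congr fun k => ?_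
    simp only [eval_X]
    ring
  have hD : (∑' k : ℕ, bc b k * ((k:ℂ) * t ^ (k-1)))
      = ∑' k : ℕ, bc b k * ((b+k) * t^k) := by
    rw [Summable.tsum_eq_zero_add hSd]
    simp only [Nat.cast_zero, zero_mul, mul_zero, zero_add]
    refine tsum_congr fun k => ?_
    rw [← hshift k]
    push_cast
    ring_nf
  have htD : t * (∑' k : ℕ, bc b k * ((k:ℂ) * t ^ (k-1)))
      = ∑' k : ℕ, bc b k * ((k:ℂ) * t^k) := by
    rw [← tsum_mul_left]
    refine tsum_congr fun k => ?_
    match k with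
    | 0 => simp
    | (j+1) =>
      simp only [Nat.add_sub_cancel]
      rw [pow_succ]
      ring
  rw [sub_mul, one_mul, htD, hD, ← Summable.tsum_sub hS1 hS2, ← tsum_mul_left]
  refine tsum_congr fun k => ?_
  ring

lemma tsum_bc (b : ℂ) {t : ℂ} (ht : ‖t‖ < 1) :
    ∑' k : ℕ, bc b k * t ^ k = (1 - t) ^ (-b) := by
  set F := fun z : ℂ => ∑' k : ℕ, bc b k * z ^ k with hF
  set g := fun z : ℂ => F z * (1 - z) ^ b with hg
  have hderiv : ∀ z ∈ Metric.ball (0:ℂ) 1, HasDerivAt g 0 z := by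
    intro z hz
    have hz1 : ‖z‖ < 1 := by simpa [Metric.mem_ball, dist_zero_right] using hz
    have h1t : (1:ℂ) - z ≠ 0 := one_sub_ne_zero' hz1
    have hFd := hasDerivAt_F b hz1
    have hGd : HasDerivAt (fun z : ℂ => (1 - z) ^ b) (b * (1 - z)^(b-1) * (-1)) z := by
      have hsub : HasDerivAt (fun z : ℂ => 1 - z) (-1) z := (hasDerivAt_id z).const_sub 1
      exact hsub.cpow_const (one_sub_mem' hz1)
    have hmul := hFd.mul hGd
    refine hmul.congr_deriv ?_
    have hpow : (1 - z) ^ b = (1 - z) ^ (b - 1) * (1 - z) := by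
      rw [Complex.cpow_sub _ _ h1t, Complex.cpow_one, div_mul_cancel₀ _ h1t]
    have key := deriv_rel b hz1
    rw [hpow]
    linear_combination ((1 - z) ^ (b-1)) * key
  have hconst : g t = g 0 := by
    refine Convex.is_const_of_fderivWithin_eq_zero (𝕜 := ℂ) (convex_ball (0:ℂ) 1)
      (fun z hz => (hderiv z hz).differentiableAt.differentiableWithinAt) (fun z hz => ?_)
      (by simpa [Metric.mem_ball, dist_zero_right] using ht) (Metric.mem_ball_self one_pos)
    rw [fderivWithin_of_isOpen Metric.isOpen_ball hz, (hderiv z hz).hasFDerivAt.fderiv]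
    ext w
    simp
  have hg0 : g 0 = 1 := by
    rw [hg]
    simp only [sub_zero, Complex.one_cpow, mul_one, hF]
    rw [tsum_eq_single 0 (fun k hk => by simp [zero_pow hk])]
    simp [bc_zero]
  have h1t : (1:ℂ) - t ≠ 0 := one_sub_ne_zero' ht
  have hmul : (1 - t)^(-b) * (1-t)^b = 1 := by
    rw [← Complex.cpow_add _ _ h1t, neg_add_cancel, Complex.cpow_zero]
  have hne : (1-t)^b ≠ 0 := by
    intro h
    rw [h, mul_zero] at hmul
    exact zero_ne_one hmul
  have hFt : F t * (1-t)^b = 1 := hconst.trans hg0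
  exact mul_right_cancel₀ hne (by rw [hFt, hmul])


lemma tsum_bc_desc (a : ℂ) (j : ℕ) {t : ℂ} (ht : ‖t‖ < 1) :
    ∑' k : ℕ, bc a k * ((descPochhammer ℂ j).eval (k:ℂ) / (Nat.factorial j : ℂ)) * t ^ k
      = bc a j * t ^ j * (1 - t) ^ (-a - j) := by
  set f := fun k : ℕ => bc a k * ((descPochhammer ℂ j).eval (k:ℂ) / (Nat.factorial j : ℂ)) * t ^ k
    with hf
  have hinj : Function.Injective (fun m : ℕ => m + j) := add_left_injective j
  have hsupp : ∀ k ∉ Set.range (fun m : ℕ => m + j), f k = 0 := by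
    intro k hk
    have hkj : k < j := by
      by_contra h
      exact hk ⟨k - j, by simp; omega⟩
    have hz : (descPochhammer ℂ j).eval ((k:ℕ):ℂ) = 0 := by
      rw [descPochhammer_eval_eq_descFactorial, Nat.descFactorial_eq_zero_iff_lt.mpr hkj,
        Nat.cast_zero]
    simp [hf, hz]
  rw [← hinj.tsum_eq (Function.support_subset_iff'.mpr hsupp)]
  have key : ∀ m : ℕ, f (m + j) = (bc a j * t ^ j) * (bc (a + j) m * t ^ m) := by
    intro m
    have hd1 : (descPochhammer ℂ j).eval (((m+j:ℕ)):ℂ) = (((m+j).descFactorial j : ℕ):ℂ) :=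
      descPochhammer_eval_eq_descFactorial ℂ (m+j) j
    have hd2 : ((m+j).descFactorial j) * (Nat.factorial m) = Nat.factorial (m+j) := by
      rw [Nat.add_descFactorial_eq_ascFactorial, mul_comm, Nat.factorial_mul_ascFactorial]
    have hd3 : (ascPochhammer ℂ (j+m)).eval a
        = (ascPochhammer ℂ j).eval a * (ascPochhammer ℂ m).eval (a + j) := by
      rw [← ascPochhammer_mul, eval_mul, eval_comp, eval_add, eval_X, eval_natCast]
    have hfacm : ((Nat.factorial m : ℕ):ℂ) ≠ 0 := by exact_mod_cast (Nat.factorial_pos m).ne'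
    have hfacj : ((Nat.factorial j : ℕ):ℂ) ≠ 0 := by exact_mod_cast (Nat.factorial_pos j).ne'
    have hfacmj : ((Nat.factorial (m+j) : ℕ):ℂ) ≠ 0 := by
      exact_mod_cast (Nat.factorial_pos (m+j)).ne'
    have hd2' : (((m+j).descFactorial j : ℕ):ℂ) * ((Nat.factorial m : ℕ):ℂ)
        = ((Nat.factorial (m+j) : ℕ):ℂ) := by exact_mod_cast congrArg (Nat.cast (R := ℂ)) hd2
    simp only [hf, bc, hd1]
    rw [show m + j = j + m from add_comm m j] at hd2' ⊢
    have hD : (((j+m).descFactorial j : ℕ):ℂ)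
        = ((Nat.factorial (j+m) : ℕ):ℂ) / ((Nat.factorial m : ℕ):ℂ) := by
      rw [eq_div_iff hfacm]
      exact hd2'
    rw [hd3, pow_add, hD]
    have hfacjm : ((Nat.factorial (j+m) : ℕ):ℂ) ≠ 0 := by
      exact_mod_cast (Nat.factorial_pos (j+m)).ne'
    field_simp
  calc ∑' m, f (m + j) = ∑' m, (bc a j * t ^ j) * (bc (a + j) m * t ^ m) := tsum_congr key
    _ = (bc a j * t ^ j) * ∑' m, bc (a + j) m * t ^ m := tsum_mul_left
    _ = bc a j * t ^ j * (1 - t) ^ (-a - j) := by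
        rw [tsum_bc (a + j) ht, neg_add]
        ring_nf

lemma main_aux (a : ℂ) : ∀ (d : ℕ) (P : Polynomial ℂ), P.natDegree ≤ d →
    ∃ Q : Polynomial ℂ, Q.natDegree ≤ d ∧ ∀ t : ℂ, ‖t‖ < 1 →
      (∑' k : ℕ, bc a k * P.eval (k:ℂ) * t ^ k) = Q.eval t * (1 - t) ^ (-a - (d:ℂ)) := by
  intro d
  induction d with
  | zero =>
    intro P hP
    obtain ⟨c, rfl⟩ := Polynomial.natDegree_eq_zero.mp (Nat.le_zero.mp hP)
    refine ⟨Polynomial.C c, by simp, fun t ht => ?_⟩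
    simp only [eval_C, Nat.cast_zero, sub_zero]
    calc ∑' k : ℕ, bc a k * c * t^k = c * ∑' k : ℕ, bc a k * t^k := by
          rw [← tsum_mul_left]
          exact tsum_congr fun k => by ring
      _ = c * (1-t)^(-a) := by rw [tsum_bc a ht]
  | succ d IH =>
    intro P hP
    set c : ℂ := P.coeff (d+1) * ((Nat.factorial (d+1) : ℕ):ℂ) with hc
    set B : Polynomial ℂ := Polynomial.C (((Nat.factorial (d+1) : ℕ):ℂ)⁻¹) * descPochhammer ℂ (d+1)
      with hB
    have hfac : ((Nat.factorial (d+1) : ℕ):ℂ) ≠ 0 := by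
      exact_mod_cast (Nat.factorial_pos (d+1)).ne'
    have hBdeg : B.natDegree = d+1 := by
      rw [hB, natDegree_C_mul (inv_ne_zero hfac), descPochhammer_natDegree]
    have hBcoeff : B.coeff (d+1) = ((Nat.factorial (d+1) : ℕ):ℂ)⁻¹ := by
      rw [hB, coeff_C_mul]
      have : (descPochhammer ℂ (d+1)).coeff (d+1) = 1 := by
        have hm := monic_descPochhammer ℂ (d+1)
        have := hm.coeff_natDegree
        rwa [descPochhammer_natDegree] at this
      rw [this, mul_one]
    set P₁ : Polynomial ℂ := P - Polynomial.C c * B with hP₁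
    have hP₁deg : P₁.natDegree ≤ d := by
      rw [Polynomial.natDegree_le_iff_coeff_eq_zero]
      intro i hi
      rw [hP₁, Polynomial.coeff_sub, Polynomial.coeff_C_mul]
      rcases eq_or_lt_of_le (Nat.succ_le_of_lt hi) with h|h
      · rw [← h, hBcoeff, hc, mul_assoc, mul_inv_cancel₀ hfac, mul_one, sub_self]
      · have h1 : P.coeff i = 0 := Polynomial.coeff_eq_zero_of_natDegree_lt (lt_of_le_of_lt hP h)
        have h2 : B.coeff i = 0 := Polynomial.coeff_eq_zero_of_natDegree_lt (hBdeg ▸ h)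
        rw [h1, h2, mul_zero, sub_zero]
    obtain ⟨Q₁, hQ₁deg, hQ₁⟩ := IH P₁ hP₁deg
    refine ⟨Q₁ * (1 - Polynomial.X)
      + Polynomial.C (c * bc a (d+1)) * Polynomial.X^(d+1), ?_, ?_⟩
    · refine le_trans (Polynomial.natDegree_add_le _ _) (max_le ?_ ?_)
      · refine le_trans (Polynomial.natDegree_mul_le) ?_
        have h1 : (1 - Polynomial.X : Polynomial ℂ).natDegree ≤ 1 := by
          refine le_trans (Polynomial.natDegree_sub_le _ _) ?_
          simp
        omega
      · refine le_trans (Polynomial.natDegree_mul_le) ?_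
        rw [Polynomial.natDegree_C, Polynomial.natDegree_X_pow, zero_add]
    · intro t ht
      have h1t : (1:ℂ) - t ≠ 0 := one_sub_ne_zero' ht
      have hsplit : ∀ k : ℕ, bc a k * P.eval (k:ℂ) * t^k
          = bc a k * P₁.eval (k:ℂ) * t^k + c * (bc a k * B.eval (k:ℂ) * t^k) := by
        intro k
        rw [hP₁]
        simp only [Polynomial.eval_sub, Polynomial.eval_mul, Polynomial.eval_C]
        ring
      rw [tsum_congr hsplit,
        Summable.tsum_add (summable_poly a P₁ ht) ((summable_poly a B ht).mul_left c),
        hQ₁ t ht, tsum_mul_left]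
      have hBsum : ∑' k : ℕ, bc a k * B.eval (k:ℂ) * t^k
          = bc a (d+1) * t^(d+1) * (1 - t)^(-a - (d+1:ℕ)) := by
        rw [← tsum_bc_desc a (d+1) ht]
        refine tsum_congr fun k => ?_
        rw [hB]
        simp only [Polynomial.eval_mul, Polynomial.eval_C]
        rw [inv_mul_eq_div]
      rw [hBsum]
      have hEexp : (-a - ((d:ℕ):ℂ)) = (-a - (((d+1):ℕ):ℂ)) + 1 := by push_cast; ring
      rw [hEexp, Complex.cpow_add _ _ h1t, Complex.cpow_one]
      simp only [Polynomial.eval_add, Polynomial.eval_mul, Polynomial.eval_sub,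
        Polynomial.eval_one, Polynomial.eval_X, Polynomial.eval_C, Polynomial.eval_pow]
      push_cast
      ring

/-- If `P` is a polynomial of degree `d`, then
`∑_{k≥0} ((a)_k / k!) P(k) t^k = Q(t) (1-t)^(-a-d)` for `|t| < 1`,
where `Q` is a polynomial of degree at most `d`. -/
theorem binomial_series_times_polynomial (a : ℂ) (d : ℕ)
    (P : Polynomial ℂ) (hP : P.natDegree = d) :
    ∃ Q : Polynomial ℂ, Q.natDegree ≤ d ∧
      ∀ t : ℂ, ‖t‖ < 1 →
        (∑' k : ℕ, ((ascPochhammer ℂ k).eval a / (Nat.factorial k)) *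
            P.eval (k : ℂ) * t ^ k)
        = Q.eval t * (1 - t) ^ (-a - (d : ℂ)) := by
  obtain ⟨Q, h1, h2⟩ := main_aux a d P hP.le
  exact ⟨Q, h1, fun t ht => h2 t ht⟩
end

section
/- Uniqueness of the polynomial solution in the A₁ case: if g is not an integer and n₁ ≤ n₂ are integers, then any two Laurent-polynomial solutions of the hypergeometric-type ODE t(1−t)f'' + (c − (a+b+1)t) f' − ab f = 0 with a = n₁−n₂, b = g, c = n₁−n₂+1−g that are polynomials in t are proportional. -/
open Finset Polynomial
open Finset Polynomial

lemma laurent_coeff_eq_zero (S : Finset ℤ) (d : ℤ → ℂ)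
    (h : ∀ t : ℂ, t ≠ 0 → ∑ k ∈ S, d k * t ^ k = 0) :
    ∀ k ∈ S, d k = 0 := by
  rcases S.eq_empty_or_nonempty with rfl | hS
  · simp
  set N : ℤ := -S.min' hS with hNdef
  have hN : ∀ k ∈ S, 0 ≤ k + N := fun k hk => by
    have := S.min'_le k hk; omega
  set P : Polynomial ℂ := ∑ k ∈ S, Polynomial.C (d k) * Polynomial.X ^ (k + N).toNat with hP
  have hPeval : ∀ t : ℂ, t ≠ 0 → P.eval t = t ^ N * ∑ k ∈ S, d k * t ^ k := by
    intro t ht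
    rw [hP, Polynomial.eval_finset_sum, Finset.mul_sum]
    refine Finset.sum_congr rfl fun k hk => ?_
    rw [Polynomial.eval_mul, Polynomial.eval_C, Polynomial.eval_pow, Polynomial.eval_X]
    rw [← zpow_natCast t, Int.toNat_of_nonneg (hN k hk)]
    rw [zpow_add₀ ht]
    ring
  have hP0 : P = 0 := by
    apply Polynomial.eq_zero_of_infinite_isRoot
    apply Set.Infinite.mono (s := {(0:ℂ)}ᶜ)
    · intro t ht
      have : t ≠ 0 := ht
      simp only [Set.mem_setOf_eq, Polynomial.IsRoot, hPeval t this, h t this, mul_zero]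
    · exact Set.Finite.infinite_compl (Set.finite_singleton 0)
  intro k hk
  have hcoeff : P.coeff (k + N).toNat = d k := by
    rw [hP, Polynomial.finset_sum_coeff]
    rw [Finset.sum_eq_single k]
    · simp
    · intro j hj hjk
      rw [Polynomial.coeff_C_mul, Polynomial.coeff_X_pow, if_neg, mul_zero]
      intro hEq
      apply hjk
      have h1 := Int.toNat_of_nonneg (hN j hj)
      have h2 := Int.toNat_of_nonneg (hN k hk)
      omega
    · intro h; exact absurd hk h
  rw [hP0] at hcoeff
  simpa using hcoeff.symm

lemma hasDerivAt_laurent (c : ℤ → ℂ) (s : Finset ℤ) (t : ℂ) (ht : t ≠ 0) :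
    HasDerivAt (fun t : ℂ => ∑ k ∈ s, c k * t ^ k)
      (∑ k ∈ s, c k * ((k : ℂ) * t ^ (k - 1))) t := by
  apply HasDerivAt.fun_sum
  intro k _
  exact (hasDerivAt_zpow k t (Or.inl ht)).const_mul (c k)

lemma perk (a g t : ℂ) (ht : t ≠ 0) (ck : ℂ) (k : ℤ) :
    t * (1 - t) * (ck * ((k : ℂ) * (((k : ℂ) - 1) * t ^ (k - 2))))
      + ((a + 1 - g) - (a + g + 1) * t) * (ck * ((k : ℂ) * t ^ (k - 1)))
      - a * g * (ck * t ^ k)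
    = (ck * (k : ℂ) * ((k : ℂ) + a - g)) * t ^ (k - 1)
      + (-(ck) * (((k : ℂ) + a) * ((k : ℂ) + g))) * t ^ k := by
  have h1 : t ^ (k - 1) = t ^ (k - 2) * t := by
    have e : k - 1 = k - 2 + 1 := by ring
    rw [e, zpow_add_one₀ ht]
  have h2 : t ^ k = t ^ (k - 1) * t := by
    have e : k = k - 1 + 1 := by ring
    nth_rewrite 1 [e]
    rw [zpow_add_one₀ ht]
  rw [h2, h1]; ring
lemma laurent_ode_recurrence (a g : ℂ) (s : Finset ℤ) (c : ℤ → ℂ) (f : ℂ → ℂ)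
    (hf : f = fun t : ℂ => ∑ k ∈ s, c k * t ^ k)
    (hode : ∀ t : ℂ, t ≠ 0 →
      t * (1 - t) * deriv (deriv f) t + ((a + 1 - g) - (a + g + 1) * t) * deriv f t
        - a * g * f t = 0) :
    ∀ k : ℤ, (if k + 1 ∈ s then c (k + 1) else 0) * ((k : ℂ) + 1) * ((k : ℂ) + 1 + a - g)
      = (if k ∈ s then c k else 0) * (((k : ℂ) + a) * ((k : ℂ) + g)) := by
  set e : ℤ → ℂ := fun k => if k ∈ s then c k else 0 with he
  -- first derivative
  have hd1 : ∀ t : ℂ, t ≠ 0 → deriv f t = ∑ k ∈ s, c k * ((k : ℂ) * t ^ (k - 1)) := by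
    intro t ht
    rw [hf]
    exact (hasDerivAt_laurent c s t ht).deriv
  -- second derivative
  have hd2 : ∀ t : ℂ, t ≠ 0 →
      deriv (deriv f) t = ∑ k ∈ s, c k * ((k : ℂ) * (((k : ℂ) - 1) * t ^ (k - 2))) := by
    intro t ht
    have hev : deriv f =ᶠ[nhds t] fun x => ∑ k ∈ s, (fun y : ℂ => c k * ((k : ℂ) * y ^ (k - 1))) x := by
      filter_upwards [eventually_ne_nhds ht] with x hx
      simpa using hd1 x hx
    rw [hev.deriv_eq]
    have : HasDerivAt (fun x : ℂ => ∑ k ∈ s, (fun y : ℂ => c k * ((k : ℂ) * y ^ (k - 1))) x)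
        (∑ k ∈ s, c k * ((k : ℂ) * (((k : ℂ) - 1) * t ^ (k - 2)))) t := by
      apply HasDerivAt.fun_sum
      intro k _
      have h := ((hasDerivAt_zpow (k - 1) t (Or.inl ht)).const_mul (c k * (k : ℂ)))
      have e1 : k - 1 - 1 = k - 2 := by ring
      rw [e1] at h
      refine (h.congr_deriv (by push_cast; ring)).congr_of_eventuallyEq ?_
      exact Filter.Eventually.of_forall fun y => by beta_reduce; ring
    exact this.deriv
  -- the combined Laurent sum
  set T : Finset ℤ := s ∪ s.image (· - 1) with hT
  have key : ∀ k ∈ T,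
      e (k + 1) * ((k : ℂ) + 1) * ((k : ℂ) + 1 + a - g)
        + (-(e k) * (((k : ℂ) + a) * ((k : ℂ) + g))) = 0 := by
    apply laurent_coeff_eq_zero
    intro t ht
    have h0 := hode t ht
    rw [hd1 t ht, hd2 t ht, hf] at h0
    simp only [] at h0
    rw [Finset.mul_sum, Finset.mul_sum, Finset.mul_sum, ← Finset.sum_add_distrib,
      ← Finset.sum_sub_distrib] at h0
    have h1 : ∑ k ∈ s,
        (t * (1 - t) * (c k * ((k : ℂ) * (((k : ℂ) - 1) * t ^ (k - 2))))
          + ((a + 1 - g) - (a + g + 1) * t) * (c k * ((k : ℂ) * t ^ (k - 1)))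
          - a * g * (c k * t ^ k))
        = ∑ k ∈ s, ((c k * (k : ℂ) * ((k : ℂ) + a - g)) * t ^ (k - 1)
            + (-(c k) * (((k : ℂ) + a) * ((k : ℂ) + g))) * t ^ k) := by
      exact Finset.sum_congr rfl fun k _ => perk a g t ht (c k) k
    rw [h1, Finset.sum_add_distrib] at h0
    -- reindex first sum
    have h2 : ∑ k ∈ s, (c k * (k : ℂ) * ((k : ℂ) + a - g)) * t ^ (k - 1)
        = ∑ j ∈ s.image (· - 1), (e (j + 1) * ((j : ℂ) + 1) * ((j : ℂ) + 1 + a - g)) * t ^ j := by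
      rw [Finset.sum_image (fun x _ y _ h => by omega)]
      refine Finset.sum_congr rfl fun k hk => ?_
      have : k - 1 + 1 = k := by ring
      rw [this, he]
      simp only [if_pos hk]
      push_cast
      ring_nf
    rw [h2] at h0
    have h3 : ∑ j ∈ s.image (· - 1), (e (j + 1) * ((j : ℂ) + 1) * ((j : ℂ) + 1 + a - g)) * t ^ j
        = ∑ j ∈ T, (e (j + 1) * ((j : ℂ) + 1) * ((j : ℂ) + 1 + a - g)) * t ^ j := by
      apply Finset.sum_subset (Finset.subset_union_right)
      intro j _ hj
      have : j + 1 ∉ s := fun hmem => hj (Finset.mem_image.mpr ⟨j + 1, hmem, by omega⟩)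
      rw [he]; simp [this]
    have h4 : ∑ k ∈ s, (-(c k) * (((k : ℂ) + a) * ((k : ℂ) + g))) * t ^ k
        = ∑ k ∈ T, (-(e k) * (((k : ℂ) + a) * ((k : ℂ) + g))) * t ^ k := by
      have h4a : ∑ k ∈ s, (-(c k) * (((k : ℂ) + a) * ((k : ℂ) + g))) * t ^ k
          = ∑ k ∈ s, (-(e k) * (((k : ℂ) + a) * ((k : ℂ) + g))) * t ^ k :=
        Finset.sum_congr rfl fun k hk => by simp only [he, if_pos hk]
      rw [h4a]
      apply Finset.sum_subset (Finset.subset_union_left)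
      intro k _ hk
      simp [he, hk]
    rw [h3, h4, ← Finset.sum_add_distrib] at h0
    rw [← h0]
    exact Finset.sum_congr rfl fun k _ => by ring
  intro k
  by_cases hk : k ∈ T
  · have := key k hk
    linear_combination this
  · have hks : k ∉ s := fun h => hk (Finset.mem_union_left _ h)
    have hks1 : k + 1 ∉ s := fun h => hk (Finset.mem_union_right _ (Finset.mem_image.mpr ⟨k + 1, h, by omega⟩))
    simp [hks, hks1]

lemma backward_vanish (n₁ n₂ : ℤ) (hn : n₁ ≤ n₂) (g : ℂ) (hg : ∀ m : ℤ, g ≠ (m : ℂ))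
    (e : ℤ → ℂ)
    (hrec : ∀ k : ℤ, e (k + 1) * ((k : ℂ) + 1) * ((k : ℂ) + 1 + ((n₁ : ℂ) - n₂) - g)
      = e k * (((k : ℂ) + ((n₁ : ℂ) - n₂)) * ((k : ℂ) + g))) :
    ∀ k : ℤ, k ≤ -1 → e k = 0 := by
  have hgk : ∀ k : ℤ, (k : ℂ) + g ≠ 0 := by
    intro k h
    exact hg (-k) (by push_cast; linear_combination h)
  have ha : ∀ k : ℤ, k ≤ -1 → ((k : ℂ) + ((n₁ : ℂ) - n₂)) ≠ 0 := by
    intro k hk h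
    have h2 : ((k + n₁ - n₂ : ℤ) : ℂ) = 0 := by push_cast; linear_combination h
    have h3 : k + n₁ - n₂ = 0 := by exact_mod_cast h2
    omega
  have main : ∀ m : ℕ, e (-1 - (m : ℤ)) = 0 := by
    intro m
    induction m with
    | zero =>
      have h : e (-1) * ((((-1 : ℤ) : ℂ) + ((n₁ : ℂ) - n₂)) * (((-1 : ℤ) : ℂ) + g)) = 0 := by
        rw [← hrec (-1)]
        norm_num
      have hX := ha (-1) le_rfl
      have hY := hgk (-1)
      have := (mul_eq_zero.mp h).resolve_right (mul_ne_zero hX hY)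
      simpa using this
    | succ m ih =>
      have harg : (-2 - (m : ℤ)) + 1 = -1 - (m : ℤ) := by ring
      have h := hrec (-2 - (m : ℤ))
      rw [harg, ih, zero_mul, zero_mul] at h
      have hX := ha (-2 - (m : ℤ)) (by omega)
      have hY := hgk (-2 - (m : ℤ))
      have h2 := (mul_eq_zero.mp h.symm).resolve_right (mul_ne_zero hX hY)
      have harg2 : -1 - ((m + 1 : ℕ) : ℤ) = -2 - (m : ℤ) := by push_cast; ring
      rw [harg2]
      exact h2
  intro k hk
  have : -1 - (((-1 - k).toNat : ℕ) : ℤ) = k := by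
    have := Int.toNat_of_nonneg (show (0:ℤ) ≤ -1 - k by omega)
    omega
  rw [← this]
  exact main _

lemma forward_vanish (n₁ n₂ : ℤ) (g : ℂ) (hg : ∀ m : ℤ, g ≠ (m : ℂ))
    (e : ℤ → ℂ)
    (hrec : ∀ k : ℤ, e (k + 1) * ((k : ℂ) + 1) * ((k : ℂ) + 1 + ((n₁ : ℂ) - n₂) - g)
      = e k * (((k : ℂ) + ((n₁ : ℂ) - n₂)) * ((k : ℂ) + g)))
    (h0 : e 0 = 0) : ∀ k : ℤ, 0 ≤ k → e k = 0 := by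
  have hb : ∀ k : ℤ, ((k : ℂ) + 1 + ((n₁ : ℂ) - n₂) - g) ≠ 0 := by
    intro k h
    exact hg (k + 1 + n₁ - n₂) (by push_cast; linear_combination -h)
  have hc : ∀ k : ℤ, 0 ≤ k → ((k : ℂ) + 1) ≠ 0 := by
    intro k hk h
    have h2 : ((k + 1 : ℤ) : ℂ) = 0 := by push_cast; linear_combination h
    have h3 : k + 1 = 0 := by exact_mod_cast h2
    omega
  have main : ∀ m : ℕ, e (m : ℤ) = 0 := by
    intro m
    induction m with
    | zero => simpa using h0
    | succ m ih =>
      have h := hrec (m : ℤ)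
      rw [ih, zero_mul] at h
      have hA := hc (m : ℤ) (by positivity)
      have hB := hb (m : ℤ)
      have h2 := (mul_eq_zero.mp h).resolve_right hB
      have h3 := (mul_eq_zero.mp h2).resolve_right hA
      have harg : ((m + 1 : ℕ) : ℤ) = (m : ℤ) + 1 := by push_cast; ring
      rw [harg]
      exact h3
  intro k hk
  have : ((k.toNat : ℕ) : ℤ) = k := Int.toNat_of_nonneg hk
  rw [← this]
  exact main _

/-- Uniqueness of the Laurent-polynomial solution in the `A₁` case: if `g` is not
an integer and `n₁ ≤ n₂`, then any two Laurent-polynomial solutions of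
`t(1-t) f'' + (c - (a+b+1)t) f' - ab f = 0` with `a = n₁-n₂`, `b = g`,
`c = n₁-n₂+1-g` are proportional. -/
theorem a1_uniqueness (n₁ n₂ : ℤ) (hn : n₁ ≤ n₂) (g : ℂ)
    (hg : ∀ m : ℤ, g ≠ (m : ℂ))
    (s : Finset ℤ) (c₁ c₂ : ℤ → ℂ)
    (f₁ f₂ : ℂ → ℂ)
    (hf₁ : f₁ = fun t : ℂ => ∑ k ∈ s, c₁ k * t ^ k)
    (hf₂ : f₂ = fun t : ℂ => ∑ k ∈ s, c₂ k * t ^ k)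
    (hode₁ : ∀ t : ℂ, t ≠ 0 →
      t * (1 - t) * deriv (deriv f₁) t
        + (((n₁ : ℂ) - n₂ + 1 - g) - (((n₁ : ℂ) - n₂) + g + 1) * t) * deriv f₁ t
        - ((n₁ : ℂ) - n₂) * g * f₁ t = 0)
    (hode₂ : ∀ t : ℂ, t ≠ 0 →
      t * (1 - t) * deriv (deriv f₂) t
        + (((n₁ : ℂ) - n₂ + 1 - g) - (((n₁ : ℂ) - n₂) + g + 1) * t) * deriv f₂ t
        - ((n₁ : ℂ) - n₂) * g * f₂ t = 0) :
    ∃ μ ν : ℂ, (μ, ν) ≠ (0, 0) ∧ ∀ t : ℂ, t ≠ 0 → μ * f₁ t = ν * f₂ t := by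
  have hrec₁ := laurent_ode_recurrence ((n₁ : ℂ) - n₂) g s c₁ f₁ hf₁ hode₁
  have hrec₂ := laurent_ode_recurrence ((n₁ : ℂ) - n₂) g s c₂ f₂ hf₂ hode₂
  set e₁ : ℤ → ℂ := fun k => if k ∈ s then c₁ k else 0 with he₁
  set e₂ : ℤ → ℂ := fun k => if k ∈ s then c₂ k else 0 with he₂
  have hrec₁' : ∀ k : ℤ, e₁ (k + 1) * ((k : ℂ) + 1) * ((k : ℂ) + 1 + ((n₁ : ℂ) - n₂) - g)
      = e₁ k * (((k : ℂ) + ((n₁ : ℂ) - n₂)) * ((k : ℂ) + g)) := hrec₁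
  have hrec₂' : ∀ k : ℤ, e₂ (k + 1) * ((k : ℂ) + 1) * ((k : ℂ) + 1 + ((n₁ : ℂ) - n₂) - g)
      = e₂ k * (((k : ℂ) + ((n₁ : ℂ) - n₂)) * ((k : ℂ) + g)) := hrec₂
  have hneg₁ := backward_vanish n₁ n₂ hn g hg e₁ hrec₁'
  have hneg₂ := backward_vanish n₁ n₂ hn g hg e₂ hrec₂'
  by_cases h0 : e₁ 0 = 0
  · -- f₁ is identically zero
    have hall : ∀ k ∈ s, c₁ k = 0 := by
      intro k hk
      rcases le_or_gt k (-1) with hk' | hk'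
      · have := hneg₁ k hk'
        rw [he₁] at this
        simpa [hk] using this
      · have := forward_vanish n₁ n₂ g hg e₁ hrec₁' h0 k (by omega)
        rw [he₁] at this
        simpa [hk] using this
    refine ⟨1, 0, by simp, ?_⟩
    intro t ht
    rw [hf₁]
    simp only [one_mul, zero_mul]
    exact Finset.sum_eq_zero fun k hk => by rw [hall k hk, zero_mul]
  · refine ⟨e₂ 0, e₁ 0, ?_, ?_⟩
    · simp only [ne_eq, Prod.mk.injEq, not_and]
      intro _
      exact h0
    set d : ℤ → ℂ := fun k => e₂ 0 * e₁ k - e₁ 0 * e₂ k with hd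
    have hrecd : ∀ k : ℤ, d (k + 1) * ((k : ℂ) + 1) * ((k : ℂ) + 1 + ((n₁ : ℂ) - n₂) - g)
        = d k * (((k : ℂ) + ((n₁ : ℂ) - n₂)) * ((k : ℂ) + g)) := by
      intro k
      simp only [hd]
      linear_combination e₂ 0 * hrec₁' k - e₁ 0 * hrec₂' k
    have hd0 : d 0 = 0 := by simp only [hd]; ring
    have hdall : ∀ k : ℤ, d k = 0 := by
      intro k
      rcases le_or_gt k (-1) with hk' | hk'
      · simp only [hd, hneg₁ k hk', hneg₂ k hk', mul_zero, sub_zero, sub_self]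
      · exact forward_vanish n₁ n₂ g hg d hrecd hd0 k (by omega)
    intro t ht
    rw [hf₁, hf₂]
    simp only [Finset.mul_sum]
    refine Finset.sum_congr rfl fun k hk => ?_
    have h := hdall k
    rw [hd] at h
    simp only [he₁, he₂, if_pos hk] at h
    have h2 : e₂ 0 * c₁ k = e₁ 0 * c₂ k := by linear_combination h
    linear_combination (t ^ k) * h2
end
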